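/- Let G be a graph with m edges, m̃ ≥ max{4, e^{-1/10}·m}, p = 1/(10√m̃), and u a vertex with deg(u) ≥ √m̃. Draw S by including each vertex independently with probability p. Then Pr[no non-u edge lies in S] - Pr[S ∩ N(u) = ∅] - (1/2)·Pr[|S ∩ N(u)| = 1] ≥ 1/30; equivalently, the 'starness' probability S_u ≥ 1/30. -/

import Mathlib

open scoped Classical

namespace StarAux
variable {V : Type*} [Fintype V] [DecidableEq V]

noncomputable def wt (p : ℝ) (g : V → Bool) : ℝ := ∏ w : V, (if g w then p else 1 - p)

lemma wt_nonneg {p : ℝ} (hp0 : 0 ≤ p) (hp1 : p ≤ 1) (g : V → Bool) : 0 ≤ wt p g :=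
  Finset.prod_nonneg fun w _ => by by_cases h : g w <;> simp [h] <;> linarith

lemma sum_prod_bool (f : V → Bool → ℝ) :
    ∑ g : V → Bool, ∏ w, f w (g w) = ∏ w, (f w true + f w false) := by
  classical
  have : (∏ w : V, (f w true + f w false)) = ∏ w : V, ∑ b : Bool, f w b := by simp
  rw [this, Finset.prod_univ_sum]
  apply Finset.sum_congr _ (fun _ _ => rfl)
  rw [← Fintype.piFinset_univ]

lemma sum_if_forall (p : ℝ) (T : Finset V) (c : V → Bool) :
    ∑ g : V → Bool, (if ∀ w ∈ T, g w = c w then wt p g else 0)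
      = ∏ w ∈ T, (if c w then p else 1 - p) := by
  have key : ∀ g : V → Bool,
      (if ∀ w ∈ T, g w = c w then wt p g else 0)
        = ∏ w : V, ((if w ∈ T ∧ g w ≠ c w then 0 else 1) * (if g w then p else 1 - p)) := by
    intro g
    rw [Finset.prod_mul_distrib]
    by_cases h : ∀ w ∈ T, g w = c w
    · rw [if_pos h]
      have h1 : ∏ w : V, (if w ∈ T ∧ g w ≠ c w then (0:ℝ) else 1) = 1 := by
        apply Finset.prod_eq_one
        intro w _
        rw [if_neg]
        rintro ⟨hw, hne⟩
        exact hne (h w hw)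
      rw [h1, one_mul]; rfl
    · rw [if_neg h]
      push_neg at h
      obtain ⟨w₀, hw₀, hne⟩ := h
      have h1 : ∏ w : V, (if w ∈ T ∧ g w ≠ c w then (0:ℝ) else 1) = 0 :=
        Finset.prod_eq_zero (Finset.mem_univ w₀) (by rw [if_pos ⟨hw₀, hne⟩])
      rw [h1, zero_mul]
  rw [Finset.sum_congr rfl fun g _ => key g]
  rw [sum_prod_bool (fun w b => (if w ∈ T ∧ b ≠ c w then 0 else 1) * (if b then p else 1 - p))]
  have step : ∀ w : V,
      ((if w ∈ T ∧ true ≠ c w then (0:ℝ) else 1) * (if true then p else 1 - p)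
        + (if w ∈ T ∧ false ≠ c w then (0:ℝ) else 1) * (if false then p else 1 - p))
      = (if w ∈ T then (if c w then p else 1 - p) else 1) := by
    intro w
    by_cases hw : w ∈ T <;> cases hcw : c w <;> simp [hw, hcw]
  rw [Finset.prod_congr rfl fun w _ => step w]
  rw [Finset.prod_ite_mem, Finset.univ_inter]

lemma prob_all_eq (p : ℝ) (T : Finset V) (c : Bool) :
    ∑ g : V → Bool, (if ∀ w ∈ T, g w = c then wt p g else 0)
      = (if c then p else 1 - p) ^ T.card := by
  rw [sum_if_forall p T (fun _ => c), Finset.prod_const]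

lemma wt_sum_one (p : ℝ) : ∑ g : V → Bool, wt p g = 1 := by
  have h := prob_all_eq (V := V) p (∅ : Finset V) true
  simpa using h

lemma prob_exactly_one (p : ℝ) (T : Finset V) :
    ∑ g : V → Bool, (if (T.filter fun w => g w = true).card = 1 then wt p g else 0)
      = (T.card : ℝ) * (p * (1 - p) ^ (T.card - 1)) := by
  have hequiv : ∀ (g : V → Bool) (v : V), v ∈ T →
      ((∀ w ∈ T, g w = (if w = v then true else false)) ↔
        (T.filter fun w => g w = true) = {v}) := by
    intro g v hv
    constructor
    · intro h
      ext w
      simp only [Finset.mem_filter, Finset.mem_singleton]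
      constructor
      · rintro ⟨hwT, hgw⟩
        have := h w hwT
        rw [hgw] at this
        by_contra hne
        simp [hne] at this
      · rintro rfl
        exact ⟨hv, by simpa using h _ hv⟩
    · intro h w hw
      by_cases hwv : w = v
      · subst hwv
        have : w ∈ T.filter fun w => g w = true := by rw [h]; simp
        simp only [Finset.mem_filter] at this
        simp [this.2]
      · have : w ∉ T.filter fun w => g w = true := by rw [h]; simp [hwv]
        simp only [Finset.mem_filter, not_and] at this
        simp [hwv, Bool.not_eq_true] at this ⊢
        exact this hw
  have key : ∀ g : V → Bool,
      (if (T.filter fun w => g w = true).card = 1 then wt p g else 0)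
        = ∑ v ∈ T, (if ∀ w ∈ T, g w = (if w = v then true else false) then wt p g else 0) := by
    intro g
    by_cases h : (T.filter fun w => g w = true).card = 1
    · rw [if_pos h]
      obtain ⟨a, ha⟩ := Finset.card_eq_one.mp h
      have haT : a ∈ T := by
        have : a ∈ T.filter fun w => g w = true := by rw [ha]; simp
        exact (Finset.mem_filter.mp this).1
      rw [Finset.sum_eq_single a]
      · rw [if_pos ((hequiv g a haT).mpr ha)]
      · intro v hv hva
        rw [if_neg]
        intro hc
        have := (hequiv g v hv).mp hc
        rw [ha] at this
        exact hva (Finset.singleton_injective this).symm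
      · intro ha'; exact absurd haT ha'
    · rw [if_neg h]
      symm
      apply Finset.sum_eq_zero
      intro v hv
      rw [if_neg]
      intro hc
      exact h (by rw [(hequiv g v hv).mp hc]; simp)
  rw [Finset.sum_congr rfl fun g _ => key g, Finset.sum_comm]
  have perv : ∀ v ∈ T,
      ∑ g : V → Bool, (if ∀ w ∈ T, g w = (if w = v then true else false) then wt p g else 0)
        = p * (1 - p) ^ (T.card - 1) := by
    intro v hv
    rw [sum_if_forall]
    rw [← Finset.mul_prod_erase T _ hv]
    simp only [if_pos rfl]
    congr 1
    · rw [Finset.prod_congr rfl (fun w hw => by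
        rw [if_neg (by simp [Finset.mem_erase.mp hw |>.1])]), Finset.prod_const,
        Finset.card_erase_of_mem hv]
  rw [Finset.sum_congr rfl perv, Finset.sum_const, nsmul_eq_mul]

lemma prob_two_true (p : ℝ) {a b : V} (hab : a ≠ b) :
    ∑ g : V → Bool, (if g a = true ∧ g b = true then wt p g else 0) = p ^ 2 := by
  have hc : ∀ g : V → Bool,
      ((g a = true ∧ g b = true) ↔ ∀ w ∈ ({a, b} : Finset V), g w = true) := by
    intro g
    simp [Finset.mem_insert, or_imp, forall_and]
  rw [Finset.sum_congr rfl fun g _ => if_congr (hc g) rfl rfl]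
  rw [sum_if_forall p ({a,b}) (fun _ => true)]
  simp [Finset.prod_const, Finset.card_insert_of_notMem, hab]

end StarAux

open StarAux

set_option maxHeartbeats 3000000 in
theorem starness_lower_bound {V : Type*} [Fintype V] [DecidableEq V]
    (G : SimpleGraph V) [DecidableRel G.Adj] (mt p : ℝ)
    (hmt : max 4 (Real.exp (-(1/10)) * (G.edgeFinset.card : ℝ)) ≤ mt)
    (hp : p = 1 / (10 * Real.sqrt mt)) (u : V)
    (hu : Real.sqrt mt ≤ (G.degree u : ℝ)) :
    1 / 30 ≤
      (1 / 2) * (∑ g : V → Bool,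
        if ((∀ a b, G.Adj a b → g a = true → g b = true → a = u ∨ b = u) ∧
            ((G.neighborFinset u).filter (fun w => g w = true)).card = 1)
          then ∏ w : V, (if g w then p else 1 - p) else 0) +
      (∑ g : V → Bool,
        if ((∀ a b, G.Adj a b → g a = true → g b = true → a = u ∨ b = u) ∧
            2 ≤ ((G.neighborFinset u).filter (fun w => g w = true)).card)
          then ∏ w : V, (if g w then p else 1 - p) else 0) := by
  classical
  -- basic facts about mt and p
  have hmt4 : (4:ℝ) ≤ mt := le_trans (le_max_left _ _) hmt
  have hm : Real.exp (-(1/10)) * (G.edgeFinset.card : ℝ) ≤ mt :=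
    le_trans (le_max_right _ _) hmt
  have hmt0 : (0:ℝ) < mt := by linarith
  have hs2 : (2:ℝ) ≤ Real.sqrt mt := by
    rw [show (2:ℝ) = Real.sqrt 4 by
      rw [show (4:ℝ) = 2^2 by norm_num, Real.sqrt_sq]; norm_num]
    exact Real.sqrt_le_sqrt hmt4
  have hs0 : (0:ℝ) < Real.sqrt mt := by linarith
  have hp0 : 0 < p := by rw [hp]; positivity
  have hp20 : p ≤ 1/20 := by
    rw [hp, div_le_div_iff₀ (by positivity) (by norm_num)]
    linarith
  have hp1 : p ≤ 1 := by linarith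
  have hps : p * Real.sqrt mt = 1/10 := by
    rw [hp]
    rw [div_mul_eq_mul_div, one_mul, div_eq_div_iff (by positivity) (by norm_num)]
    ring
  -- abbreviations
  set N := G.neighborFinset u with hN
  set d := N.card with hd
  have hdeg : (G.degree u : ℕ) = d := rfl
  have hdr : Real.sqrt mt ≤ (d:ℝ) := by rwa [← hdeg]
  have hd2 : 2 ≤ d := by exact_mod_cast hs2.trans hdr
  set m := G.edgeFinset.card with hm'
  set A : (V → Bool) → Prop :=
    fun g => ∀ a b, G.Adj a b → g a = true → g b = true → a = u ∨ b = u with hA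
  set k : (V → Bool) → ℕ := fun g => (N.filter (fun w => g w = true)).card with hk
  -- probabilities
  have hwt : ∀ g : V → Bool, (∏ w : V, (if g w then p else 1 - p)) = wt p g := fun g => rfl
  -- partition
  have hpart : ∑ g : V → Bool, (if A g then wt p g else 0)
      = (∑ g : V → Bool, (if A g ∧ k g = 0 then wt p g else 0))
        + (∑ g : V → Bool, (if A g ∧ k g = 1 then wt p g else 0))
        + (∑ g : V → Bool, (if A g ∧ 2 ≤ k g then wt p g else 0)) := by
    rw [← Finset.sum_add_distrib, ← Finset.sum_add_distrib]
    apply Finset.sum_congr rfl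
    intro g _
    by_cases hAg : A g
    · rcases Nat.lt_or_ge (k g) 2 with h2 | h2
      · interval_cases h : k g <;> simp [hAg, h]
      · have h0 : k g ≠ 0 := by omega
        have h1 : k g ≠ 1 := by omega
        simp [hAg, h0, h1, h2]
    · simp [hAg]
  -- monotonicity
  have hmono0 : ∑ g : V → Bool, (if A g ∧ k g = 0 then wt p g else 0)
      ≤ ∑ g : V → Bool, (if k g = 0 then wt p g else 0) := by
    apply Finset.sum_le_sum
    intro g _
    split_ifs with h1 h2 h2
    · exact le_refl _
    · exact absurd h1.2 h2
    · exact wt_nonneg hp0.le hp1 g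
    · exact le_refl _
  have hmono1 : ∑ g : V → Bool, (if A g ∧ k g = 1 then wt p g else 0)
      ≤ ∑ g : V → Bool, (if k g = 1 then wt p g else 0) := by
    apply Finset.sum_le_sum
    intro g _
    split_ifs with h1 h2 h2
    · exact le_refl _
    · exact absurd h1.2 h2
    · exact wt_nonneg hp0.le hp1 g
    · exact le_refl _
  -- value of Pr[k = 0]
  have h0val : ∑ g : V → Bool, (if k g = 0 then wt p g else 0) = (1 - p) ^ d := by
    have hiff : ∀ g : V → Bool, (k g = 0 ↔ ∀ w ∈ N, g w = false) := by
      intro g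
      rw [hk]
      simp only [Finset.card_eq_zero, Finset.filter_eq_empty_iff]
      constructor
      · intro h w hw; simpa [Bool.not_eq_true] using h hw
      · intro h w hw; simp [h w hw]
    rw [Finset.sum_congr rfl fun g _ => if_congr (hiff g) rfl rfl, prob_all_eq]
    simp; rfl
  -- value of Pr[k = 1]
  have h1val : ∑ g : V → Bool, (if k g = 1 then wt p g else 0)
      = (d:ℝ) * (p * (1 - p) ^ (d - 1)) := prob_exactly_one p N
  -- total mass
  have htot : (∑ g : V → Bool, (if A g then wt p g else 0))
      + (∑ g : V → Bool, (if ¬ A g then wt p g else 0)) = 1 := by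
    rw [← Finset.sum_add_distrib]
    rw [show ∑ g : V → Bool, ((if A g then wt p g else 0) + (if ¬ A g then wt p g else 0))
        = ∑ g : V → Bool, wt p g from Finset.sum_congr rfl fun g _ => by
          by_cases h : A g
          · rw [if_pos h, if_neg (not_not_intro h), add_zero]
          · rw [if_neg h, if_pos h, zero_add]]
    exact wt_sum_one p
  -- union bound
  have hbad : ∑ g : V → Bool, (if ¬ A g then wt p g else 0) ≤ (m:ℝ) * p ^ 2 := by
    have hpt : ∀ g : V → Bool, (if ¬ A g then wt p g else 0)
        ≤ ∑ e ∈ G.edgeFinset, (if ∀ x ∈ e, g x = true then wt p g else 0) := by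
      intro g
      by_cases h : A g
      · rw [if_neg (not_not_intro h)]
        apply Finset.sum_nonneg
        intro e _
        split_ifs
        · exact wt_nonneg hp0.le hp1 g
        · exact le_refl _
      · rw [if_pos h]
        simp only [hA] at h
        push_neg at h
        obtain ⟨a, b, hadj, hga, hgb, _⟩ := h
        have hmem : s(a, b) ∈ G.edgeFinset := by
          rw [SimpleGraph.mem_edgeFinset]; exact hadj
        have hval : (if ∀ x ∈ (s(a,b) : Sym2 V), g x = true then wt p g else 0) = wt p g := by
          rw [if_pos]
          intro x hx
          rcases Sym2.mem_iff.mp hx with rfl | rfl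
          · exact hga
          · exact hgb
        refine le_trans (le_of_eq hval.symm)
          (Finset.single_le_sum (f := fun e => if ∀ x ∈ e, g x = true then wt p g else 0)
            (fun e _ => ?_) hmem)
        split_ifs
        · exact wt_nonneg hp0.le hp1 g
        · exact le_refl _
    calc ∑ g : V → Bool, (if ¬ A g then wt p g else 0)
        ≤ ∑ g : V → Bool, ∑ e ∈ G.edgeFinset, (if ∀ x ∈ e, g x = true then wt p g else 0) :=
          Finset.sum_le_sum fun g _ => hpt g
      _ = ∑ e ∈ G.edgeFinset, ∑ g : V → Bool, (if ∀ x ∈ e, g x = true then wt p g else 0) :=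
          Finset.sum_comm
      _ = ∑ e ∈ G.edgeFinset, p ^ 2 := by
          apply Finset.sum_congr rfl
          intro e he
          induction e using Sym2.ind with
          | _ a b =>
            have hadj : G.Adj a b := SimpleGraph.mem_edgeFinset.mp he
            have hiff : ∀ g : V → Bool,
                ((∀ x ∈ (s(a,b) : Sym2 V), g x = true) ↔ (g a = true ∧ g b = true)) := by
              intro g
              constructor
              · intro h
                exact ⟨h a (Sym2.mem_mk_left a b), h b (Sym2.mem_mk_right a b)⟩
              · rintro ⟨h1, h2⟩ x hx
                rcases Sym2.mem_iff.mp hx with rfl | rfl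
                · exact h1
                · exact h2
            rw [Finset.sum_congr rfl fun g _ => if_congr (hiff g) rfl rfl]
            exact prob_two_true p hadj.ne
      _ = (m:ℝ) * p ^ 2 := by rw [Finset.sum_const, nsmul_eq_mul]
  -- lower bound on Pr[A]
  have hAge : (1:ℝ) - (m:ℝ) * p ^ 2 ≤ ∑ g : V → Bool, (if A g then wt p g else 0) := by
    linarith
  -- numeric bounds
  have hmp2 : (m:ℝ) * p ^ 2 ≤ 1/90 := by
    have he : Real.exp (1/10) ≤ 10/9 := by
      have h1 : (9:ℝ)/10 ≤ Real.exp (-(1/10)) := by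
        have := Real.add_one_le_exp (-(1/10):ℝ)
        linarith
      rw [show (1:ℝ)/10 = -(-(1/10)) by ring, Real.exp_neg]
      rw [inv_le_comm₀ (Real.exp_pos _) (by norm_num)]
      linarith
    have hmle : (m:ℝ) ≤ Real.exp (1/10) * mt := by
      have h2 := mul_le_mul_of_nonneg_left hm (Real.exp_pos (1/10)).le
      rw [← mul_assoc, ← Real.exp_add] at h2
      simpa using h2
    have hpsq : p ^ 2 = 1 / (100 * mt) := by
      rw [hp]
      rw [div_pow, mul_pow, Real.sq_sqrt hmt0.le]
      norm_num
    rw [hpsq]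
    rw [mul_one_div, div_le_iff₀ (by positivity)]
    calc (m:ℝ) ≤ Real.exp (1/10) * mt := hmle
      _ ≤ (10/9) * mt := by nlinarith
      _ ≤ 1/90 * (100 * mt) := by nlinarith
  have hpd : 1/10 ≤ p * (d:ℝ) := by
    calc (1:ℝ)/10 = p * Real.sqrt mt := hps.symm
      _ ≤ p * d := by nlinarith
  -- the key analytic bound
  have hmain : (1 - p) ^ d + (1/2) * ((d:ℝ) * (p * (1 - p) ^ (d - 1))) ≤ 21/22 := by
    have h1p0 : (0:ℝ) ≤ 1 - p := by linarith
    have hdpow : (1 - p) ^ d = (1 - p) ^ (d - 1) * (1 - p) := by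
      rw [← pow_succ]
      congr 1
      omega
    have hexp1 : (1 - p) ^ (d - 1) ≤ Real.exp (-(p * ((d:ℝ) - 1))) := by
      have h1 : (1 - p) ≤ Real.exp (-p) := by
        have := Real.add_one_le_exp (-p)
        linarith
      calc (1 - p) ^ (d - 1) ≤ Real.exp (-p) ^ (d - 1) :=
            pow_le_pow_left₀ h1p0 h1 _
        _ = Real.exp (-(p * ((d:ℝ) - 1))) := by
            rw [← Real.exp_nat_mul]
            congr 1
            have hc : ((d - 1 : ℕ) : ℝ) = (d:ℝ) - 1 := by
              have h1d : (1:ℕ) ≤ d := by omega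
              push_cast [Nat.cast_sub h1d]
              ring
            rw [hc]
            ring
    set x := p * (d:ℝ) with hx
    have hfact : (1 - p) ^ d + (1/2) * ((d:ℝ) * (p * (1 - p) ^ (d - 1)))
        = (1 - p) ^ (d - 1) * ((1 - p) + x / 2) := by
      rw [hdpow]; ring
    rw [hfact]
    have hx0 : (0:ℝ) ≤ x := by nlinarith
    have hstep1 : (1 - p) ^ (d - 1) * ((1 - p) + x / 2)
        ≤ Real.exp (-(p * ((d:ℝ) - 1))) * ((1 - p) + x / 2) := by
      apply mul_le_mul_of_nonneg_right hexp1
      linarith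
    have hrw : Real.exp (-(p * ((d:ℝ) - 1))) = Real.exp p * Real.exp (-x) := by
      rw [← Real.exp_add]; congr 1; rw [hx]; ring
    have hstep2 : Real.exp (-x) * ((1 - p) + x / 2)
        ≤ Real.exp (-(1/10)) * (21/20 - p) := by
      have hkey : (1 - p) + x / 2 ≤ Real.exp (x - 1/10) * (21/20 - p) := by
        have h1 : 1 + (x - 1/10) ≤ Real.exp (x - 1/10) := by
          have := Real.add_one_le_exp (x - 1/10)
          linarith
        nlinarith [hpd, hp20, hp0]
      have h2 : Real.exp (-x) * (Real.exp (x - 1/10) * (21/20 - p))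
          = Real.exp (-(1/10)) * (21/20 - p) := by
        rw [← mul_assoc, ← Real.exp_add]
        ring_nf
      calc Real.exp (-x) * ((1 - p) + x / 2)
          ≤ Real.exp (-x) * (Real.exp (x - 1/10) * (21/20 - p)) := by
            apply mul_le_mul_of_nonneg_left hkey (Real.exp_pos _).le
        _ = Real.exp (-(1/10)) * (21/20 - p) := h2
    have hstep3 : Real.exp p * (Real.exp (-(1/10)) * (21/20 - p)) ≤ 21/22 := by
      have hre : Real.exp p * Real.exp (-(1/10)) = Real.exp (p - 1/10) := by
        rw [← Real.exp_add]; ring_nf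
      rw [← mul_assoc, hre]
      have h1 : Real.exp (p - 1/10) ≤ 1 / (11/10 - p) := by
        rw [show p - 1/10 = -(1/10 - p) by ring, Real.exp_neg, one_div (11/10 - p)]
        have h2 := Real.add_one_le_exp (1/10 - p)
        apply inv_anti₀
        next => linarith
        next => linarith
      have h3 : (21:ℝ)/20 - p ≤ (21/22) * (11/10 - p) := by linarith
      calc Real.exp (p - 1/10) * (21/20 - p)
          ≤ (1 / (11/10 - p)) * (21/20 - p) := by
            apply mul_le_mul_of_nonneg_right h1 (by linarith)
        _ ≤ 21/22 := by
            rw [one_div, inv_mul_le_iff₀ (by linarith)]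
            linarith
    calc (1 - p) ^ (d - 1) * ((1 - p) + x / 2)
        ≤ Real.exp (-(p * ((d:ℝ) - 1))) * ((1 - p) + x / 2) := hstep1
      _ = Real.exp p * (Real.exp (-x) * ((1 - p) + x / 2)) := by rw [hrw]; ring
      _ ≤ Real.exp p * (Real.exp (-(1/10)) * (21/20 - p)) := by
          apply mul_le_mul_of_nonneg_left hstep2 (Real.exp_pos _).le
      _ ≤ 21/22 := hstep3
  -- put everything together
  have key : (1:ℝ) - (m:ℝ) * p^2 - (1 - p)^d - (1/2) * ((d:ℝ) * (p * (1 - p) ^ (d-1)))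
      ≤ (1 / 2) * (∑ g : V → Bool, (if A g ∧ k g = 1 then wt p g else 0))
        + (∑ g : V → Bool, (if A g ∧ 2 ≤ k g then wt p g else 0)) := by
    have e1 : ∑ g : V → Bool, (if A g ∧ 2 ≤ k g then wt p g else 0)
        = (∑ g : V → Bool, (if A g then wt p g else 0))
          - (∑ g : V → Bool, (if A g ∧ k g = 0 then wt p g else 0))
          - (∑ g : V → Bool, (if A g ∧ k g = 1 then wt p g else 0)) := by
      rw [hpart]; ring
    rw [e1]
    have hm1le : ∑ g : V → Bool, (if A g ∧ k g = 1 then wt p g else 0)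
        ≤ (d:ℝ) * (p * (1 - p) ^ (d - 1)) := h1val ▸ hmono1
    have hm0le : ∑ g : V → Bool, (if A g ∧ k g = 0 then wt p g else 0)
        ≤ (1 - p) ^ d := h0val ▸ hmono0
    linarith
  have conv1 : (∑ g : V → Bool,
        if ((∀ a b, G.Adj a b → g a = true → g b = true → a = u ∨ b = u) ∧
            ((G.neighborFinset u).filter (fun w => g w = true)).card = 1)
          then ∏ w : V, (if g w then p else 1 - p) else 0)
      = ∑ g : V → Bool, (if A g ∧ k g = 1 then wt p g else 0) := by
    apply Finset.sum_congr rfl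
    intro g _
    refine if_congr ?_ (hwt g) rfl
    simp only [hA, hk, hN]
  have conv2 : (∑ g : V → Bool,
        if ((∀ a b, G.Adj a b → g a = true → g b = true → a = u ∨ b = u) ∧
            2 ≤ ((G.neighborFinset u).filter (fun w => g w = true)).card)
          then ∏ w : V, (if g w then p else 1 - p) else 0)
      = ∑ g : V → Bool, (if A g ∧ 2 ≤ k g then wt p g else 0) := by
    apply Finset.sum_congr rfl
    intro g _
    refine if_congr ?_ (hwt g) rfl
    simp only [hA, hk, hN]
  rw [conv1, conv2]
  refine le_trans ?_ key
  linarith
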